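/- Let 0 < ε < 1/5, let ξ ∈ ℝ^r be a nonzero entrywise nonnegative vector, and let q_1, …, q_n ∈ ℝ^r be nonzero entrywise nonnegative vectors ordered so that ‖q_1‖₂ ≥ ‖q_2‖₂ ≥ ⋯ ≥ ‖q_n‖₂, each satisfying q_kᵀξ ≥ (1−ε)·‖q_k‖₂·‖ξ‖₂. Let C > 0 and let S* ⊆ [n] be a nonempty set with ‖Σ_{k∈S*} q_k‖₂ ≥ C. Assume ‖Σ_{k=1}^n q_k‖₂ ≥ C and let m be the least index such that ‖Σ_{k=1}^m q_k‖₂ ≥ C. Then m ≤ |S*|/(1−5ε) + 1. -/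

import Mathlib

open RealInnerProductSpace

set_option maxHeartbeats 1000000 in
/-- Greedy cardinality bound: with nonzero nonnegative vectors `q 0, …, q (n-1)` sorted in
nonincreasing order of Euclidean norm, all within angle `cos⁻¹(1-ε)` of a common nonzero
nonnegative direction `ξ`, if `S* ⊆ [n]` is a feasible cover (`‖Σ_{k∈S*} q k‖ ≥ C`) and
`m` is the least index with `‖Σ_{k<m} q k‖ ≥ C`, then `m ≤ |S*|/(1-5ε) + 1`. -/
theorem greedy_cover_cardinality (r n : ℕ) (ε : ℝ) (hε0 : 0 < ε) (hε1 : ε < 1/5)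
    (ξ : EuclideanSpace ℝ (Fin r)) (hξ0 : ξ ≠ 0) (hξ : ∀ i, 0 ≤ ξ i)
    (q : ℕ → EuclideanSpace ℝ (Fin r))
    (hq0 : ∀ k < n, q k ≠ 0)
    (hqnn : ∀ k < n, ∀ i, 0 ≤ q k i)
    (hord : ∀ k k', k ≤ k' → k' < n → ‖q k'‖ ≤ ‖q k‖)
    (hang : ∀ k < n, ⟪q k, ξ⟫ ≥ (1 - ε) * ‖q k‖ * ‖ξ‖)
    (C : ℝ) (hC : 0 < C)
    (S : Finset ℕ) (hSsub : S ⊆ Finset.range n) (hSne : S.Nonempty)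
    (hScov : C ≤ ‖∑ k ∈ S, q k‖)
    (hall : C ≤ ‖∑ k ∈ Finset.range n, q k‖)
    (m : ℕ)
    (hm : C ≤ ‖∑ k ∈ Finset.range m, q k‖)
    (hmin : ∀ m' < m, ‖∑ k ∈ Finset.range m', q k‖ < C) :
    (m : ℝ) ≤ (S.card : ℝ)/(1 - 5*ε) + 1 := by
  have hxpos : (0:ℝ) < ‖ξ‖ := norm_pos_iff.mpr hξ0
  set c : ℝ := 1 - 4*ε + 2*ε^2 with hcdef
  have hc0 : 0 < c := by nlinarith
  have hc1 : c ≤ 1 := by nlinarith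
  have h5 : 0 < 1 - 5*ε := by linarith
  have hc5 : 1 - 5*ε ≤ c := by nlinarith
  have hNpos : ∀ k, k < n → 0 < ‖q k‖ := fun k hk => norm_pos_iff.mpr (hq0 k hk)
  -- pairwise inner product bound
  have pair : ∀ j, j < n → ∀ k, k < n → c * (‖q j‖ * ‖q k‖) ≤ ⟪q j, q k⟫ := by
    intro j hj k hk
    set a : ℕ → ℝ := fun i => ⟪q i, ξ⟫ / ‖ξ‖ with hadef
    set w : ℕ → EuclideanSpace ℝ (Fin r) := fun i => q i - (a i / ‖ξ‖) • ξ with hwdef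
    have hane : ‖ξ‖ ≠ 0 := ne_of_gt hxpos
    have hval : ∀ i, ⟪q i, ξ⟫ = a i * ‖ξ‖ := by
      intro i; simp only [hadef]; field_simp
    have ha_lb : ∀ i, i < n → (1 - ε) * ‖q i‖ ≤ a i := by
      intro i hi
      have := hang i hi
      rw [hval i] at this
      have := le_of_mul_le_mul_right (by linarith : (1 - ε) * ‖q i‖ * ‖ξ‖ ≤ a i * ‖ξ‖) hxpos
      linarith
    have hinner_w : ∀ i i', ⟪w i, w i'⟫ = ⟪q i, q i'⟫ - a i * a i' := by
      intro i i'
      have h1 : ⟪ξ, q i'⟫ = a i' * ‖ξ‖ := by rw [real_inner_comm]; exact hval i'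
      simp only [hwdef, inner_sub_left, inner_sub_right, real_inner_smul_left,
        real_inner_smul_right, real_inner_self_eq_norm_sq, hval i, hval i', h1]
      field_simp
      ring
    have hw_norm : ∀ i, i < n → ‖w i‖^2 ≤ (2*ε - ε^2) * ‖q i‖^2 := by
      intro i hi
      have h1 : ‖w i‖^2 = ‖q i‖^2 - (a i)^2 := by
        have := hinner_w i i
        rw [real_inner_self_eq_norm_sq, real_inner_self_eq_norm_sq] at this
        linarith
      have h2 : (1 - ε) * ‖q i‖ ≤ a i := ha_lb i hi
      have h3 : 0 ≤ (1 - ε) * ‖q i‖ := mul_nonneg (by linarith) (norm_nonneg _)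
      nlinarith
    have hcs : -(‖w j‖ * ‖w k‖) ≤ ⟪q j, q k⟫ - a j * a k := by
      rw [← hinner_w j k]
      exact (abs_le.mp (abs_real_inner_le_norm (w j) (w k))).1
    have heps : (0:ℝ) ≤ 2*ε - ε^2 := by nlinarith
    have hwjk : ‖w j‖ * ‖w k‖ ≤ (2*ε - ε^2) * (‖q j‖ * ‖q k‖) := by
      have h1 := hw_norm j hj
      have h2 := hw_norm k hk
      have hPQ : (‖w j‖ * ‖w k‖)^2 ≤ ((2*ε - ε^2) * (‖q j‖ * ‖q k‖))^2 := by
        have := mul_le_mul h1 h2 (sq_nonneg ‖w k‖)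
          (mul_nonneg heps (sq_nonneg ‖q j‖))
        calc (‖w j‖ * ‖w k‖)^2 = ‖w j‖^2 * ‖w k‖^2 := by ring
          _ ≤ (2*ε - ε^2) * ‖q j‖^2 * ((2*ε - ε^2) * ‖q k‖^2) := this
          _ = ((2*ε - ε^2) * (‖q j‖ * ‖q k‖))^2 := by ring
      have hQ : (0:ℝ) ≤ (2*ε - ε^2) * (‖q j‖ * ‖q k‖) :=
        mul_nonneg heps (mul_nonneg (norm_nonneg _) (norm_nonneg _))
      have := Real.sqrt_le_sqrt hPQ
      rwa [Real.sqrt_sq (mul_nonneg (norm_nonneg _) (norm_nonneg _)),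
        Real.sqrt_sq hQ] at this
    have haj : (1 - ε) * ‖q j‖ ≤ a j := ha_lb j hj
    have hak : (1 - ε) * ‖q k‖ ≤ a k := ha_lb k hk
    have hNj := (hNpos j hj).le
    have hNk := (hNpos k hk).le
    have h0j : (0:ℝ) ≤ (1 - ε) * ‖q j‖ := mul_nonneg (by linarith) hNj
    have h0k : (0:ℝ) ≤ (1 - ε) * ‖q k‖ := mul_nonneg (by linarith) hNk
    have hajak : (1-ε)^2 * (‖q j‖ * ‖q k‖) ≤ a j * a k := by
      calc (1-ε)^2 * (‖q j‖ * ‖q k‖) = ((1-ε)*‖q j‖) * ((1-ε)*‖q k‖) := by ring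
        _ ≤ a j * a k := mul_le_mul haj hak h0k (h0j.trans haj)
    have hsplit : c * (‖q j‖ * ‖q k‖)
        = (1-ε)^2 * (‖q j‖ * ‖q k‖) - (2*ε - ε^2) * (‖q j‖ * ‖q k‖) := by
      rw [hcdef]; ring
    linarith
  -- stepwise growth
  have step : ∀ (T : Finset ℕ), T ⊆ Finset.range n → ∀ k, k < n →
      ‖∑ j ∈ T, q j‖ + c * ‖q k‖ ≤ ‖(∑ j ∈ T, q j) + q k‖ := by
    intro T hT k hk
    have hX : ‖∑ j ∈ T, q j‖ ≤ ∑ j ∈ T, ‖q j‖ := norm_sum_le _ _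
    have hinner : c * ‖q k‖ * ‖∑ j ∈ T, q j‖ ≤ ⟪∑ j ∈ T, q j, q k⟫ := by
      rw [sum_inner]
      calc c * ‖q k‖ * ‖∑ j ∈ T, q j‖
          ≤ c * ‖q k‖ * ∑ j ∈ T, ‖q j‖ := by
            apply mul_le_mul_of_nonneg_left hX (by positivity)
        _ = ∑ j ∈ T, c * (‖q j‖ * ‖q k‖) := by rw [Finset.mul_sum]; apply Finset.sum_congr rfl; intros; ring
        _ ≤ ∑ j ∈ T, ⟪q j, q k⟫ :=
            Finset.sum_le_sum (fun j hj => pair j (Finset.mem_range.mp (hT hj)) k hk)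
    have hsq : (‖∑ j ∈ T, q j‖ + c * ‖q k‖)^2 ≤ ‖(∑ j ∈ T, q j) + q k‖^2 := by
      rw [norm_add_sq_real]
      have hc2 : c^2 ≤ 1 := by nlinarith
      have hk2 : c^2 * ‖q k‖^2 ≤ ‖q k‖^2 := by
        have := mul_le_mul_of_nonneg_right hc2 (sq_nonneg ‖q k‖)
        linarith
      nlinarith [hinner, hk2]
    have h1 : (0:ℝ) ≤ ‖∑ j ∈ T, q j‖ + c * ‖q k‖ := by positivity
    calc ‖∑ j ∈ T, q j‖ + c * ‖q k‖ = Real.sqrt ((‖∑ j ∈ T, q j‖ + c * ‖q k‖)^2) :=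
          (Real.sqrt_sq h1).symm
      _ ≤ Real.sqrt (‖(∑ j ∈ T, q j) + q k‖^2) := Real.sqrt_le_sqrt hsq
      _ = ‖(∑ j ∈ T, q j) + q k‖ := Real.sqrt_sq (norm_nonneg _)
  -- additive lemma
  have addlem : ∀ (U T : Finset ℕ), T ⊆ Finset.range n → U ⊆ Finset.range n → Disjoint T U →
      ‖∑ j ∈ T, q j‖ + c * ∑ k ∈ U, ‖q k‖ ≤ ‖∑ j ∈ T ∪ U, q j‖ := by
    intro U
    induction U using Finset.induction_on with
    | empty => intro T _ _ _; simp
    | @insert a U haU ih =>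
      intro T hT hU hdis
      have haT : a ∉ T := fun h => (Finset.disjoint_left.mp hdis h) (Finset.mem_insert_self a U)
      have haTU : a ∉ T ∪ U := by
        simp only [Finset.mem_union]; push_neg; exact ⟨haT, haU⟩
      have han : a < n := Finset.mem_range.mp (hU (Finset.mem_insert_self a U))
      have hU' : U ⊆ Finset.range n := fun x hx => hU (Finset.mem_insert_of_mem hx)
      have hdis' : Disjoint T U := hdis.mono_right (Finset.subset_insert a U)
      have hTU : T ∪ U ⊆ Finset.range n := Finset.union_subset hT hU'
      have e1 : T ∪ insert a U = insert a (T ∪ U) := Finset.union_insert a T U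
      rw [e1, Finset.sum_insert haTU, Finset.sum_insert haU]
      have h2 := step (T ∪ U) hTU a han
      have h3 := ih T hT hU' hdis'
      have : q a + ∑ j ∈ T ∪ U, q j = (∑ j ∈ T ∪ U, q j) + q a := by abel
      rw [this]
      calc ‖∑ j ∈ T, q j‖ + c * (‖q a‖ + ∑ k ∈ U, ‖q k‖)
          = (‖∑ j ∈ T, q j‖ + c * ∑ k ∈ U, ‖q k‖) + c * ‖q a‖ := by ring
        _ ≤ ‖∑ j ∈ T ∪ U, q j‖ + c * ‖q a‖ := by linarith
        _ ≤ ‖(∑ j ∈ T ∪ U, q j) + q a‖ := h2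
  -- m ≤ n
  have hmn : m ≤ n := by
    by_contra h
    exact absurd hall (not_le.mpr (hmin n (by omega)))
  by_cases hm1 : m ≤ 1
  · have hm' : (m:ℝ) ≤ 1 := by exact_mod_cast hm1
    have : (0:ℝ) ≤ (S.card : ℝ)/(1 - 5*ε) := by positivity
    linarith
  · push_neg at hm1
    have hm2 : 2 ≤ m := hm1
    have hm2n : m - 2 < n := by omega
    set T1 := Finset.range (m-1) ∩ S with hT1def
    set G := Finset.range (m-1) \ S with hGdef
    have hunion : T1 ∪ G = Finset.range (m-1) := by
      ext x
      simp only [hT1def, hGdef, Finset.mem_union, Finset.mem_inter, Finset.mem_sdiff]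
      tauto
    have hdis : Disjoint T1 G := Finset.disjoint_left.mpr
      (fun x hx h => (Finset.mem_sdiff.mp h).2 (Finset.mem_inter.mp hx).2)
    have hrsub : Finset.range (m-1) ⊆ Finset.range n := by
      apply Finset.range_subset_range.mpr; omega
    have hT1sub : T1 ⊆ Finset.range n := (Finset.inter_subset_left).trans hrsub
    have hGsub : G ⊆ Finset.range n := (Finset.sdiff_subset).trans hrsub
    have hA := addlem G T1 hT1sub hGsub hdis
    rw [hunion] at hA
    have hB : ‖∑ k ∈ Finset.range (m-1), q k‖ < C := hmin (m-1) (by omega)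
    set S2 := S \ Finset.range (m-1) with hS2def
    set d := ‖q (m-2)‖ with hddef
    have hd : 0 < d := hNpos (m-2) hm2n
    -- C ≤ ‖Σ_{T1}‖ + Σ_{S2} N
    have hsplit : ∑ k ∈ S, q k = (∑ k ∈ T1, q k) + ∑ k ∈ S2, q k := by
      rw [hT1def, Finset.inter_comm]
      exact (Finset.sum_inter_add_sum_sdiff S (Finset.range (m-1)) q).symm
    have hCub : C ≤ ‖∑ k ∈ T1, q k‖ + ∑ k ∈ S2, ‖q k‖ := by
      calc C ≤ ‖∑ k ∈ S, q k‖ := hScov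
        _ = ‖(∑ k ∈ T1, q k) + ∑ k ∈ S2, q k‖ := by rw [hsplit]
        _ ≤ ‖∑ k ∈ T1, q k‖ + ‖∑ k ∈ S2, q k‖ := norm_add_le _ _
        _ ≤ ‖∑ k ∈ T1, q k‖ + ∑ k ∈ S2, ‖q k‖ := by
            linarith [norm_sum_le S2 q]
    have hS2bd : ∑ k ∈ S2, ‖q k‖ ≤ (S2.card : ℝ) * d := by
      have := Finset.sum_le_card_nsmul S2 (fun k => ‖q k‖) d ?_
      · simpa [nsmul_eq_mul] using this
      · intro k hk
        have hk1 : k ∈ S ∧ ¬ k < m - 1 := by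
          simpa [hS2def, Finset.mem_sdiff, Finset.mem_range] using hk
        have hkn : k < n := Finset.mem_range.mp (hSsub hk1.1)
        exact hord (m-2) k (by omega) hkn
    have hGbd : (G.card : ℝ) * d ≤ ∑ k ∈ G, ‖q k‖ := by
      have := Finset.card_nsmul_le_sum G (fun k => ‖q k‖) d ?_
      · simpa [nsmul_eq_mul] using this
      · intro k hk
        have hk1 : k < m - 1 := by
          have := (Finset.mem_sdiff.mp hk).1
          exact Finset.mem_range.mp this
        exact hord k (m-2) (by omega) hm2n
    -- combine
    have hkey : c * (G.card : ℝ) * d < (S2.card : ℝ) * d := by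
      have h1 : ‖∑ k ∈ T1, q k‖ + c * ((G.card : ℝ) * d) ≤ ‖∑ k ∈ Finset.range (m-1), q k‖ := by
        have : c * ((G.card : ℝ) * d) ≤ c * ∑ k ∈ G, ‖q k‖ :=
          mul_le_mul_of_nonneg_left hGbd hc0.le
        linarith
      nlinarith
    have hcg : c * (G.card : ℝ) ≤ (S2.card : ℝ) := by
      nlinarith
    have hcard1 : T1.card + G.card = m - 1 := by
      have h := Finset.card_inter_add_card_sdiff (Finset.range (m-1)) S
      simpa [hT1def, hGdef, Finset.card_range] using h
    have hcard2 : T1.card + S2.card = S.card := by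
      have h := Finset.card_inter_add_card_sdiff S (Finset.range (m-1))
      rw [hT1def, Finset.inter_comm, hS2def]
      exact h
    have hcard1' : (T1.card : ℝ) + (G.card : ℝ) = (m : ℝ) - 1 := by
      have h2 : ((T1.card + G.card : ℕ) : ℝ) = ((m - 1 : ℕ) : ℝ) := by rw [hcard1]
      push_cast [Nat.cast_sub (by omega : 1 ≤ m)] at h2
      linarith
    have hcard2' : (T1.card : ℝ) + (S2.card : ℝ) = (S.card : ℝ) := by exact_mod_cast hcard2
    have hmain : (1 - 5*ε) * ((m:ℝ) - 1) ≤ (S.card : ℝ) := by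
      have hT1nn : (0:ℝ) ≤ (T1.card : ℝ) := Nat.cast_nonneg _
      have hGnn : (0:ℝ) ≤ (G.card : ℝ) := Nat.cast_nonneg _
      nlinarith
    have hfin : (m:ℝ) - 1 ≤ (S.card : ℝ) / (1 - 5*ε) :=
      (le_div_iff₀ h5).mpr (by rw [mul_comm]; exact hmain)
    linarith
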